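/- Let T be a tree with n+1 vertices and let P_T ∈ L(n+1) be its lattice of subtrees. If P ∈ L(n+1) covers P_T in the lattice L(n+1) of finite atomic lattices with n+1 ordered atoms (so P = P_T ∪ {p} for a single new element p), then the reduced homology group H̃_0 of the open interval (0̂, p) in P is nonzero; consequently the total Betti numbers of (any coordinatization of) P are strictly greater than those of P_T. -/

import Mathlib

open scoped Classical

/-- Monomials in variables `V`, represented by exponent vectors.
Multiplication is `+`, divisibility is `≤`, gcd is `⊓`, lcm is `⊔`, and the
trivial monomial `1` is `0`. -/
abbrev Monomial (V : Type*) := V →₀ ℕ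

/-- An element `x` is meet-irreducible if `x ≠ ⊤` and `x ≠ a ⊓ b` for all `a, b > x`. -/
def MeetIrred {P : Type*} [Lattice P] [OrderTop P] (x : P) : Prop :=
  x ≠ ⊤ ∧ ∀ a b : P, x < a → x < b → x ≠ a ⊓ b

/-- A finite lattice is atomic if every element other than `⊥` is the join of
the atoms below it. -/
def IsFinAtomic (P : Type*) [Lattice P] [BoundedOrder P] : Prop :=
  ∀ p : P, p ≠ ⊥ → IsLUB {a : P | IsAtom a ∧ a ≤ p} p

/-- The monomial `x(a) = ∏_{p ∈ (⌈a⌉)ᶜ} m_p` attached to `a` by a labeling `m`. -/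
noncomputable def coordGen {P V : Type*} [PartialOrder P] [Fintype P]
    (m : P → Monomial V) (a : P) : Monomial V :=
  ∑ p ∈ Finset.univ.filter (fun p : P => ¬ a ≤ p), m p

/-- The lcm lattice of a finite family of monomials: all least common multiples
of subsets of the family (the empty lcm being `1`), ordered by divisibility. -/
abbrev LcmLat {ι V : Type*} [Fintype ι] (g : ι → Monomial V) : Type _ :=
  {l : Monomial V // ∃ s : Finset ι, l = s.sup g}

/-- Condition (C1): every meet-irreducible element has a nontrivial label. -/
def CondC1 {P V : Type*} [Lattice P] [BoundedOrder P] (m : P → Monomial V) : Prop :=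
  ∀ p : P, MeetIrred p → m p ≠ 0

/-- Condition (C2): labels with a common variable sit on comparable elements. -/
def CondC2 {P V : Type*} [PartialOrder P] (m : P → Monomial V) : Prop :=
  ∀ p q : P, m p ⊓ m q ≠ 0 → p ≤ q ∨ q ≤ p

/-- A labeling is a coordinatization if the lcm lattice of the ideal generated
by the monomials `x(a)`, for `a` ranging over the atoms, is isomorphic to `P`. -/
def IsCoordinatization {P V : Type*} [PartialOrder P] [OrderBot P] [Fintype P]
    (m : P → Monomial V) : Prop :=
  Nonempty (P ≃o LcmLat (fun a : {a : P // IsAtom a} => coordGen m a.val))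

section Trees

variable {V : Type*} [Fintype V] (G : SimpleGraph V)

/-- The poset `P_T` of subtrees of `T`: finite sets of vertices whose induced
subgraph is (pre)connected, ordered by inclusion.  This includes the empty set
and all single vertices. -/
abbrev SubtreePoset (G : SimpleGraph V) : Type _ :=
  {s : Finset V // (G.induce (↑s : Set V)).Preconnected}

noncomputable instance : Fintype (SubtreePoset G) := Fintype.ofFinite _

/-- The single-vertex subtree `{v}`, an atom of `P_T`. -/
def vertexSubtree (v : V) : SubtreePoset G :=
  ⟨{v}, by
    rintro ⟨a, ha⟩ ⟨b, hb⟩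
    simp only [Finset.coe_singleton, Set.mem_singleton_iff] at ha hb
    subst ha; subst hb
    exact SimpleGraph.Reachable.refl _⟩

/-- The empty subtree, the minimum of `P_T`. -/
def emptySubtree : SubtreePoset G :=
  ⟨∅, by rintro ⟨a, ha⟩; simp at ha⟩

end Trees

/-- The comparability graph of the open interval `(b, p)` in a poset: its
connected components compute `H̃₀` of the order complex of the interval. -/
def intervalGraph {P : Type*} [PartialOrder P] (b p : P) :
    SimpleGraph {x : P // b < x ∧ x < p} where
  Adj x y := x ≠ y ∧ ((x : P) ≤ y ∨ (y : P) ≤ x)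
  symm := ⟨fun x y h => ⟨h.1.symm, h.2.symm⟩⟩
  loopless := ⟨fun x h => h.1 rfl⟩

/-- The total second Betti number of a finite atomic lattice with minimum `b`:
`b₂ = Σ_p dim H̃₀(Δ(b, p))`, where `dim H̃₀` of the order complex of the open
interval `(b, p)` is the number of connected components of its comparability
graph minus one. -/
noncomputable def bettiTwo (P : Type*) [PartialOrder P] [Fintype P] (b : P) : ℕ :=
  ∑ p : P, (Fintype.card ((intervalGraph b p).ConnectedComponent) - 1)

section AuxLemmas

open SimpleGraph

lemma reachInvariant {γ : Type*} {H : SimpleGraph γ} (f : γ → Prop)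
    (hf : ∀ a b, H.Adj a b → f a → f b) {a b : γ} (h : H.Reachable a b) :
    f a → f b := by
  obtain ⟨w⟩ := h
  induction w with
  | nil => exact id
  | cons h' _ ih => exact fun ha => ih (hf _ _ h' ha)

lemma cardCCEqOne {γ : Type*} {H : SimpleGraph γ} [Nonempty γ]
    (h : H.Preconnected) {inst : Fintype H.ConnectedComponent} :
    @Fintype.card _ inst = 1 := by
  haveI : Subsingleton H.ConnectedComponent :=
    ⟨SimpleGraph.ConnectedComponent.ind₂ fun a b =>
      SimpleGraph.ConnectedComponent.sound (h a b)⟩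
  haveI : Nonempty H.ConnectedComponent :=
    ⟨H.connectedComponentMk (Classical.arbitrary γ)⟩
  have h1 : @Fintype.card _ inst ≤ 1 :=
    Fintype.card_le_one_iff_subsingleton.mpr ‹Subsingleton H.ConnectedComponent›
  have h2 : 0 < @Fintype.card _ inst :=
    Fintype.card_pos_iff.mpr ‹Nonempty H.ConnectedComponent›
  omega

lemma twoLeCardCC {γ : Type*} {H : SimpleGraph γ}
    (h : ¬ H.Preconnected) {inst : Fintype H.ConnectedComponent} :
    2 ≤ @Fintype.card _ inst := by
  rw [SimpleGraph.Preconnected] at h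
  push_neg at h
  obtain ⟨a, b, hab⟩ := h
  have hne : H.connectedComponentMk a ≠ H.connectedComponentMk b := fun hc =>
    hab (SimpleGraph.ConnectedComponent.eq.1 hc)
  have : 1 < @Fintype.card _ inst := Fintype.one_lt_card_iff_nontrivial.mpr ⟨_, _, hne⟩
  omega

lemma reachMono {V : Type*} (G : SimpleGraph V) {A B : Set V} (hAB : A ⊆ B) {a b : A}
    (h : (G.induce A).Reachable a b) :
    (G.induce B).Reachable ⟨a.1, hAB a.2⟩ ⟨b.1, hAB b.2⟩ := by
  let F : G.induce A →g G.induce B := ⟨Set.inclusion hAB, fun {x y} hxy => hxy⟩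
  exact h.map F

section SubtreeFacts

variable {V : Type*} [Fintype V] {G : SimpleGraph V}

lemma subtree_le_iff {p q : SubtreePoset G} : p ≤ q ↔ p.val ⊆ q.val := Iff.rfl

lemma vertex_le_iff {v : V} {p : SubtreePoset G} : vertexSubtree G v ≤ p ↔ v ∈ p.val := by
  rw [subtree_le_iff]
  exact Finset.singleton_subset_iff

lemma empty_le (p : SubtreePoset G) : emptySubtree G ≤ p :=
  subtree_le_iff.2 (Finset.empty_subset _)

lemma empty_lt_iff {p : SubtreePoset G} : emptySubtree G < p ↔ p.val.Nonempty := by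
  rw [(empty_le p).lt_iff_ne, Finset.nonempty_iff_ne_empty]
  constructor
  · intro h hc
    exact h (Subtype.ext hc.symm)
  · intro h hc
    exact h (congrArg Subtype.val hc).symm

/-- The two-vertex subtree spanned by an edge. -/
noncomputable def edgeSubtree (G : SimpleGraph V) {z z' : V} (h : G.Adj z z') : SubtreePoset G :=
  ⟨{z, z'}, by
    have hadj : (G.induce (↑({z, z'} : Finset V) : Set V)).Adj
        ⟨z, by simp⟩ ⟨z', by simp⟩ := h
    rintro ⟨a, ha⟩ ⟨b, hb⟩
    simp only [Finset.coe_insert, Finset.coe_singleton, Set.mem_insert_iff,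
      Set.mem_singleton_iff] at ha hb
    rcases ha with rfl | rfl <;> rcases hb with rfl | rfl
    · exact SimpleGraph.Reachable.refl _
    · exact hadj.reachable
    · exact hadj.symm.reachable
    · exact SimpleGraph.Reachable.refl _⟩

end SubtreeFacts

end AuxLemmas

section IntervalConn

variable {V : Type*} [Fintype V] {G : SimpleGraph V}

lemma interval_preconnected (p : SubtreePoset G) (hcard : 3 ≤ p.val.card) :
    (intervalGraph (emptySubtree G) p).Preconnected := by
  classical
  -- singletons belong to the interval
  have hsing : ∀ u, u ∈ p.val →
      emptySubtree G < vertexSubtree G u ∧ vertexSubtree G u < p := by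
    intro u hu
    constructor
    · exact empty_lt_iff.2 ⟨u, Finset.mem_singleton_self u⟩
    · refine lt_of_le_of_ne (vertex_le_iff.2 hu) ?_
      intro hc
      have : p.val.card = 1 := by
        rw [← hc]; simp [vertexSubtree]
      omega
  set I := {r : SubtreePoset G // emptySubtree G < r ∧ r < p} with hI
  let mkS : ∀ u, u ∈ p.val → I := fun u hu => ⟨vertexSubtree G u, hsing u hu⟩
  -- any interval element reaches some singleton
  have step1 : ∀ x : I, ∃ u, ∃ hu : u ∈ p.val,
      (intervalGraph (emptySubtree G) p).Reachable x (mkS u hu) := by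
    intro x
    obtain ⟨u, hu⟩ := empty_lt_iff.1 x.2.1
    have hup : u ∈ p.val := subtree_le_iff.1 x.2.2.le hu
    refine ⟨u, hup, ?_⟩
    by_cases hx : x = mkS u hup
    · rw [hx]
    · refine SimpleGraph.Adj.reachable ⟨hx, Or.inr ?_⟩
      exact vertex_le_iff.2 hu
  -- singletons reach each other
  have hedge : ∀ (a c : V) (ha : a ∈ p.val) (hc : c ∈ p.val), G.Adj a c →
      (intervalGraph (emptySubtree G) p).Reachable (mkS a ha) (mkS c hc) := by
    intro a c ha hc hadj
    have hne : a ≠ c := hadj.ne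
    have hts : ({a, c} : Finset V) ⊆ p.val := by
      intro z hz
      rcases Finset.mem_insert.1 hz with rfl | hz
      · exact ha
      · rw [Finset.mem_singleton.1 hz]; exact hc
    have htlt : edgeSubtree G hadj < p := by
      refine lt_of_le_of_ne (subtree_le_iff.2 hts) ?_
      intro hcon
      have : p.val.card = 2 := by
        rw [← congrArg Subtype.val hcon]
        exact Finset.card_pair hne
      omega
    have htI : emptySubtree G < edgeSubtree G hadj ∧ edgeSubtree G hadj < p :=
      ⟨empty_lt_iff.2 ⟨a, Finset.mem_insert_self a {c}⟩, htlt⟩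
    have h1 : (intervalGraph (emptySubtree G) p).Adj (mkS a ha) ⟨edgeSubtree G hadj, htI⟩ := by
      refine ⟨?_, Or.inl ?_⟩
      · intro hcon
        have hval : ({a} : Finset V) = {a, c} := congrArg (Subtype.val ∘ Subtype.val) hcon
        have : c ∈ ({a} : Finset V) := by rw [hval]; exact Finset.mem_insert_of_mem (Finset.mem_singleton_self c)
        exact hne (Finset.mem_singleton.1 this).symm
      · exact subtree_le_iff.2 (Finset.singleton_subset_iff.2 (Finset.mem_insert_self a {c}))
    have h2 : (intervalGraph (emptySubtree G) p).Adj (mkS c hc) ⟨edgeSubtree G hadj, htI⟩ := by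
      refine ⟨?_, Or.inl ?_⟩
      · intro hcon
        have hval : ({c} : Finset V) = {a, c} := congrArg (Subtype.val ∘ Subtype.val) hcon
        have : a ∈ ({c} : Finset V) := by rw [hval]; exact Finset.mem_insert_self a {c}
        exact hne (Finset.mem_singleton.1 this)
      · refine subtree_le_iff.2 (Finset.singleton_subset_iff.2 ?_)
        exact Finset.mem_insert_of_mem (Finset.mem_singleton_self c)
    exact h1.reachable.trans h2.reachable.symm
  have step2 : ∀ (a b : ↥(↑p.val : Set V)),
      (G.induce (↑p.val : Set V)).Reachable a b →
      (intervalGraph (emptySubtree G) p).Reachable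
        (mkS a.1 (Finset.mem_coe.1 a.2)) (mkS b.1 (Finset.mem_coe.1 b.2)) := by
    intro a b h
    obtain ⟨w⟩ := h
    induction w with
    | nil => exact SimpleGraph.Reachable.refl _
    | @cons u v w hadj _ ih =>
      exact (hedge u.1 v.1 (Finset.mem_coe.1 u.2) (Finset.mem_coe.1 v.2) hadj).trans ih
  intro x y
  obtain ⟨u, hu, hx⟩ := step1 x
  obtain ⟨u', hu', hy⟩ := step1 y
  have := step2 ⟨u, Finset.mem_coe.2 hu⟩ ⟨u', Finset.mem_coe.2 hu'⟩
    (p.2 ⟨u, Finset.mem_coe.2 hu⟩ ⟨u', Finset.mem_coe.2 hu'⟩)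
  exact hx.trans (this.trans hy.symm)

end IntervalConn


set_option maxHeartbeats 1600000 in
/-- let `T` be a tree with `n + 1` vertices and `P_T ∈ L(n+1)`
its subtree lattice.  If a finite atomic lattice `Q` covers `P_T` in `L(n+1)` —
i.e. `Q` is obtained from `P_T` by adding a single new element `q₀`, via an
order embedding `e : P_T ↪o Q` preserving the minimum and the atoms whose image
misses exactly `q₀` — then the open interval `(0̂, q₀)` in `Q` is nonempty and
its comparability graph is disconnected (so `H̃₀` of the order complex of
`(0̂, q₀)` is nonzero); consequently the total (second) Betti number of `Q` is
strictly greater than that of `P_T`. -/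
theorem stmt12 {V Q : Type*} [Fintype V] (G : SimpleGraph V)
    (hconn : G.Connected) (hacyc : G.IsAcyclic)
    (n : ℕ) (hcard : Fintype.card V = n + 1)
    [Lattice Q] [Fintype Q] [BoundedOrder Q] (hQ : IsFinAtomic Q)
    (e : SubtreePoset G ↪o Q) (q₀ : Q)
    (hcover : ∀ q : Q, q = q₀ ∨ ∃ p, e p = q)
    (hnew : ∀ p, e p ≠ q₀)
    (hbot : e (emptySubtree G) = ⊥)
    (hatoms : ∀ q : Q, IsAtom q ↔ ∃ v, e (vertexSubtree G v) = q) :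
    ({x : Q | ⊥ < x ∧ x < q₀}.Nonempty ∧
      ¬ (intervalGraph (⊥ : Q) q₀).Preconnected) ∧
    bettiTwo Q ⊥ > bettiTwo (SubtreePoset G) (emptySubtree G) := by
  classical
  -- Basic facts
  have hq0_ne_bot : q₀ ≠ ⊥ := fun h => hnew (emptySubtree G) (by rw [hbot, h])
  have hbotlt : ∀ r : SubtreePoset G, ((⊥ : Q) < e r ↔ emptySubtree G < r) := by
    intro r; rw [← hbot]; exact e.lt_iff_lt
  -- The set of atoms below q₀
  set S : Finset V := Finset.univ.filter (fun v => e (vertexSubtree G v) ≤ q₀) with hSdef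
  have mem_S : ∀ v, v ∈ S ↔ e (vertexSubtree G v) ≤ q₀ := by
    intro v; rw [hSdef]; simp
  have key2 : ∀ r : SubtreePoset G, r.val ⊆ S → e r ≤ q₀ := by
    intro r hr
    by_cases hre : r = emptySubtree G
    · rw [hre, hbot]; exact bot_le
    · have hne : e r ≠ ⊥ := fun h => hre (e.injective (h.trans hbot.symm))
      refine (hQ (e r) hne).2 ?_
      rintro a ⟨ha, hale⟩
      obtain ⟨v, rfl⟩ := (hatoms a).1 ha
      have hv : v ∈ r.val := vertex_le_iff.1 (e.le_iff_le.1 hale)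
      exact (mem_S v).1 (hr hv)
  have key3 : ∀ r : SubtreePoset G, e r ≤ q₀ → r.val ⊆ S := by
    intro r hr v hv
    exact (mem_S v).2 (le_trans (e.le_iff_le.2 (vertex_le_iff.2 hv)) hr)
  have key4a : ∀ r : SubtreePoset G, S ⊆ r.val → q₀ ≤ e r := by
    intro r hr
    refine (hQ q₀ hq0_ne_bot).2 ?_
    rintro a ⟨ha, hale⟩
    obtain ⟨v, rfl⟩ := (hatoms a).1 ha
    have hv : v ∈ S := (mem_S v).2 hale
    exact e.le_iff_le.2 (vertex_le_iff.2 (hr hv))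
  have key4b : ∀ r : SubtreePoset G, q₀ ≤ e r → S ⊆ r.val := by
    intro r hr v hv
    exact vertex_le_iff.1 (e.le_iff_le.1 (le_trans ((mem_S v).1 hv) hr))
  have key5 : ¬ (G.induce (↑S : Set V)).Preconnected := by
    intro h
    exact hnew ⟨S, h⟩
      (le_antisymm (key2 ⟨S, h⟩ (fun v hv => hv)) (key4a ⟨S, h⟩ (fun v hv => hv)))
  -- two vertices of S not connected in the induced graph
  obtain ⟨a₀, b₀, hab⟩ : ∃ a b : ↥(↑S : Set V), ¬ (G.induce (↑S : Set V)).Reachable a b := by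
    by_contra h
    push_neg at h
    exact key5 h
  have hv₀ : a₀.1 ∈ S := Finset.mem_coe.1 a₀.2
  have hw₀ : b₀.1 ∈ S := Finset.mem_coe.1 b₀.2
  have hvw : a₀.1 ≠ b₀.1 := by
    intro h
    exact hab (by rw [show a₀ = b₀ from Subtype.ext h])
  -- singleton subtrees give interval elements below q₀
  have hsingQ : ∀ v, v ∈ S →
      (⊥ : Q) < e (vertexSubtree G v) ∧ e (vertexSubtree G v) < q₀ := by
    intro v hv
    refine ⟨(hbotlt _).2 (empty_lt_iff.2 ⟨v, Finset.mem_singleton_self v⟩), ?_⟩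
    exact lt_of_le_of_ne (key2 (vertexSubtree G v) (Finset.singleton_subset_iff.2 hv)) (hnew _)
  -- Part 2 : the interval below q₀ is disconnected
  have hnotpre : ¬ (intervalGraph (⊥ : Q) q₀).Preconnected := by
    intro hpre
    have hf : ∀ z z', (intervalGraph (⊥ : Q) q₀).Adj z z' →
        (∀ r : SubtreePoset G, e r = z.1 → ∃ u, ∃ hu : u ∈ (↑S : Set V),
          u ∈ r.val ∧ (G.induce (↑S : Set V)).Reachable ⟨u, hu⟩ a₀) →
        (∀ r : SubtreePoset G, e r = z'.1 → ∃ u, ∃ hu : u ∈ (↑S : Set V),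
          u ∈ r.val ∧ (G.induce (↑S : Set V)).Reachable ⟨u, hu⟩ a₀) := by
      intro z z' hadj hfz r' hr'
      obtain ⟨r, hr⟩ : ∃ r, e r = z.1 := (hcover z.1).resolve_left z.2.2.ne
      obtain ⟨u, hu, hur, hreach⟩ := hfz r hr
      have hrS : r.val ⊆ S := key3 r (by rw [hr]; exact z.2.2.le)
      have hr'S : r'.val ⊆ S := key3 r' (by rw [hr']; exact z'.2.2.le)
      rcases hadj.2 with hle | hle
      · have hrr : r ≤ r' := e.le_iff_le.1 (by rw [hr, hr']; exact hle)
        exact ⟨u, hu, subtree_le_iff.1 hrr hur, hreach⟩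
      · have hler : r' ≤ r := e.le_iff_le.1 (by rw [hr, hr']; exact hle)
        have hr'ne : r'.val.Nonempty := empty_lt_iff.1 ((hbotlt r').1 (by rw [hr']; exact z'.2.1))
        obtain ⟨u', hu'⟩ := hr'ne
        have hu'r : u' ∈ r.val := subtree_le_iff.1 hler hu'
        have hre : (G.induce (↑r.val : Set V)).Reachable
            ⟨u', Finset.mem_coe.2 hu'r⟩ ⟨u, Finset.mem_coe.2 hur⟩ := r.2 _ _
        have hsub : (↑r.val : Set V) ⊆ (↑S : Set V) := fun x hx =>
          Finset.mem_coe.2 (hrS (Finset.mem_coe.1 hx))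
        have hre2 := reachMono G hsub hre
        exact ⟨u', Finset.mem_coe.2 (hr'S hu'), hu', hre2.trans hreach⟩
    set za : {x : Q // ⊥ < x ∧ x < q₀} := ⟨e (vertexSubtree G a₀.1), hsingQ a₀.1 hv₀⟩
    set zb : {x : Q // ⊥ < x ∧ x < q₀} := ⟨e (vertexSubtree G b₀.1), hsingQ b₀.1 hw₀⟩
    have hfza : ∀ r : SubtreePoset G, e r = za.1 → ∃ u, ∃ hu : u ∈ (↑S : Set V),
        u ∈ r.val ∧ (G.induce (↑S : Set V)).Reachable ⟨u, hu⟩ a₀ := by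
      intro r hr
      have : r = vertexSubtree G a₀.1 := e.injective hr
      subst this
      exact ⟨a₀.1, a₀.2, Finset.mem_singleton_self _, SimpleGraph.Reachable.refl _⟩
    have hfzb := reachInvariant (H := intervalGraph (⊥ : Q) q₀)
      (fun z => ∀ r : SubtreePoset G, e r = z.1 → ∃ u, ∃ hu : u ∈ (↑S : Set V),
        u ∈ r.val ∧ (G.induce (↑S : Set V)).Reachable ⟨u, hu⟩ a₀)
      hf (hpre za zb) hfza
    obtain ⟨u, hu, hur, hreach⟩ := hfzb (vertexSubtree G b₀.1) rfl
    have huw : u = b₀.1 := Finset.mem_singleton.1 hur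
    subst huw
    exact hab hreach.symm
  -- Part 3 : Betti numbers
  -- per-element comparison of intervals
  have hresto : ∀ (p : SubtreePoset G)
      (i1 : Fintype ((intervalGraph (⊥ : Q) (e p)).ConnectedComponent))
      (i2 : Fintype ((intervalGraph (emptySubtree G) p).ConnectedComponent)),
      @Fintype.card _ i1 = @Fintype.card _ i2 := by
    intro p i1 i2
    by_cases hq : q₀ < e p
    · -- both intervals are connected and nonempty
      have hSp : S ⊆ p.val := key4b p hq.le
      have hSnep : S ≠ p.val := by
        intro h
        exact key5 (by rw [h]; exact p.2)
      have hScard : 2 ≤ S.card := Finset.one_lt_card.2 ⟨a₀.1, hv₀, b₀.1, hw₀, hvw⟩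
      have hpcard : 3 ≤ p.val.card := by
        have := Finset.card_lt_card (hSp.ssubset_of_ne hSnep)
        omega
      have hP1 := interval_preconnected p hpcard
      have hv₀p : emptySubtree G < vertexSubtree G a₀.1 ∧ vertexSubtree G a₀.1 < p := by
        refine ⟨empty_lt_iff.2 ⟨a₀.1, Finset.mem_singleton_self _⟩, ?_⟩
        refine lt_of_le_of_ne (vertex_le_iff.2 (hSp hv₀)) ?_
        intro hc
        have : p.val.card = 1 := by rw [← congrArg Subtype.val hc]; simp [vertexSubtree]
        omega
      haveI : Nonempty {r : SubtreePoset G // emptySubtree G < r ∧ r < p} :=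
        ⟨⟨vertexSubtree G a₀.1, hv₀p⟩⟩
      -- the graph homomorphism from the P-interval to the Q-interval
      let Fhom : intervalGraph (emptySubtree G) p →g intervalGraph (⊥ : Q) (e p) :=
        { toFun := fun r => ⟨e r.1, (hbotlt r.1).2 r.2.1, e.lt_iff_lt.2 r.2.2⟩,
          map_rel' := by
            rintro a b ⟨hne, h⟩
            refine ⟨fun hc => hne (Subtype.ext (e.injective (congrArg Subtype.val hc))), ?_⟩
            rcases h with h | h
            · exact Or.inl (e.le_iff_le.2 h)
            · exact Or.inr (e.le_iff_le.2 h) }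
      have hub : ∀ z : {x : Q // ⊥ < x ∧ x < e p},
          (intervalGraph (⊥ : Q) (e p)).Reachable z
            ⟨e (vertexSubtree G a₀.1), (hsingQ a₀.1 hv₀).1, lt_trans (hsingQ a₀.1 hv₀).2 hq⟩ := by
        intro z
        by_cases hz : z.1 = q₀
        · refine SimpleGraph.Adj.reachable ⟨?_, Or.inr ?_⟩
          · intro hc
            exact hnew (vertexSubtree G a₀.1) (by
              have := congrArg Subtype.val hc
              simp only at this
              rw [← this, hz])
          · rw [hz]; exact (hsingQ a₀.1 hv₀).2.le
        · obtain ⟨r, hr⟩ : ∃ r, e r = z.1 := (hcover z.1).resolve_left hz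
          have hrI : emptySubtree G < r ∧ r < p :=
            ⟨(hbotlt r).1 (by rw [hr]; exact z.2.1), e.lt_iff_lt.1 (by rw [hr]; exact z.2.2)⟩
          have hreach := (hP1 ⟨r, hrI⟩ ⟨vertexSubtree G a₀.1, hv₀p⟩).map Fhom
          have hz1 : Fhom ⟨r, hrI⟩ = z := Subtype.ext hr
          have hz2 : Fhom ⟨vertexSubtree G a₀.1, hv₀p⟩ =
              (⟨e (vertexSubtree G a₀.1), (hsingQ a₀.1 hv₀).1, lt_trans (hsingQ a₀.1 hv₀).2 hq⟩ :
                {x : Q // ⊥ < x ∧ x < e p}) := Subtype.ext rfl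
          rw [hz1, hz2] at hreach
          exact hreach
      have hQ1 : (intervalGraph (⊥ : Q) (e p)).Preconnected := fun x y =>
        (hub x).trans (hub y).symm
      haveI : Nonempty {x : Q // ⊥ < x ∧ x < e p} :=
        ⟨⟨q₀, bot_lt_iff_ne_bot.2 hq0_ne_bot, hq⟩⟩
      rw [cardCCEqOne hQ1, cardCCEqOne hP1]
    · -- the two intervals are isomorphic
      have hFbij2 : Function.Bijective (fun r : {r : SubtreePoset G // emptySubtree G < r ∧ r < p} =>
          (⟨e r.1, (hbotlt r.1).2 r.2.1, e.lt_iff_lt.2 r.2.2⟩ : {x : Q // ⊥ < x ∧ x < e p})) := by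
        constructor
        · intro a b h
          exact Subtype.ext (e.injective (congrArg Subtype.val h))
        · rintro ⟨x, hx1, hx2⟩
          have hxq : x ≠ q₀ := by
            intro h
            exact hq (by rw [← h]; exact hx2)
          obtain ⟨r, hr⟩ := (hcover x).resolve_left hxq
          refine ⟨⟨r, ?_, ?_⟩, Subtype.ext hr⟩
          · exact (hbotlt r).1 (by rw [hr]; exact hx1)
          · exact e.lt_iff_lt.1 (by rw [hr]; exact hx2)
      let iso : intervalGraph (emptySubtree G) p ≃g intervalGraph (⊥ : Q) (e p) :=
        { toEquiv := Equiv.ofBijective _ hFbij2,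
          map_rel_iff' := by
            intro a b
            constructor
            · rintro ⟨hne, h⟩
              refine ⟨fun hc => hne (by rw [hc]), ?_⟩
              rcases h with h | h
              · exact Or.inl (e.le_iff_le.1 h)
              · exact Or.inr (e.le_iff_le.1 h)
            · rintro ⟨hne, h⟩
              refine ⟨fun hc => hne (Subtype.ext (e.injective (congrArg Subtype.val hc))), ?_⟩
              rcases h with h | h
              · exact Or.inl (e.le_iff_le.2 h)
              · exact Or.inr (e.le_iff_le.2 h) }
      exact (Fintype.card_congr iso.connectedComponentEquiv).symm
  -- the sum decomposition
  have hFbij : Function.Bijective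
      (fun o : Option (SubtreePoset G) => o.elim q₀ (fun r => e r)) := by
    constructor
    · rintro (_ | r) (_ | r') h
      · rfl
      · exact absurd h.symm (hnew r')
      · exact absurd h (hnew r)
      · exact congrArg some (e.injective h)
    · intro q
      rcases hcover q with rfl | ⟨r, hr⟩
      · exact ⟨none, rfl⟩
      · exact ⟨some r, hr⟩
  have h1 := Fintype.sum_bijective _ hFbij
    (fun o : Option (SubtreePoset G) =>
      Fintype.card ((intervalGraph (⊥ : Q) (o.elim q₀ (fun r => e r))).ConnectedComponent) - 1)
    (fun q : Q => Fintype.card ((intervalGraph (⊥ : Q) q).ConnectedComponent) - 1)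
    (fun o => rfl)
  have h2 := Fintype.sum_option (fun o : Option (SubtreePoset G) =>
    Fintype.card ((intervalGraph (⊥ : Q) (o.elim q₀ (fun r => e r))).ConnectedComponent) - 1)
  have hsum : bettiTwo Q ⊥ =
      (Fintype.card ((intervalGraph (⊥ : Q) q₀).ConnectedComponent) - 1) +
      ∑ r : SubtreePoset G,
        (Fintype.card ((intervalGraph (⊥ : Q) (e r)).ConnectedComponent) - 1) := by
    unfold bettiTwo
    rw [← h1, h2]
    rfl
  have hPsum : ∑ r : SubtreePoset G,
      (Fintype.card ((intervalGraph (⊥ : Q) (e r)).ConnectedComponent) - 1) =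
      bettiTwo (SubtreePoset G) (emptySubtree G) := by
    unfold bettiTwo
    exact Finset.sum_congr rfl (fun r _ => congrArg (fun k => k - 1) (hresto r _ _))
  have hq0card : 2 ≤ Fintype.card ((intervalGraph (⊥ : Q) q₀).ConnectedComponent) :=
    twoLeCardCC hnotpre
  refine ⟨⟨⟨e (vertexSubtree G a₀.1), hsingQ a₀.1 hv₀⟩, hnotpre⟩, ?_⟩
  rw [gt_iff_lt, hsum, ← hPsum]
  omega
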